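/- (Feasibility of the limit plan.) With the notation of the previous theorem, let π_ε minimize ∬ c_ε dπ dπ over Π(σ,μ,ν) and suppose π_{ε(n)} converges weakly to π̄ along a sequence ε(n) ↓ 0. Then ∬ (d_S(s,s') − d_X(x,x'))² dπ̄ dπ̄ = GW(S,X)² and ∬ (d_S(s,s') − d_Y(y,y'))² dπ̄ dπ̄ = GW(S,Y)²; in particular the (S,X)- and (S,Y)-marginals of π̄ are optimal GW plans. -/

import Mathlib

open MeasureTheory Filter Topology

/-- The Gromov–Wasserstein cost of a plan `π` on `X × Y`. -/
noncomputable def gwCost {X Y : Type*} [PseudoMetricSpace X] [PseudoMetricSpace Y]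
    [MeasurableSpace X] [MeasurableSpace Y] (π : Measure (X × Y)) : ℝ :=
  ∫ p, ∫ q, (dist p.1 q.1 - dist p.2 q.2) ^ 2 ∂π ∂π

/-- `π` is a coupling of `μ` and `ν`. -/
def IsCoupling {X Y : Type*} [MeasurableSpace X] [MeasurableSpace Y]
    (π : Measure (X × Y)) (μ : Measure X) (ν : Measure Y) : Prop :=
  π.map Prod.fst = μ ∧ π.map Prod.snd = ν

/-- The squared Gromov–Wasserstein distance. -/
noncomputable def gwSq {X Y : Type*} [PseudoMetricSpace X] [PseudoMetricSpace Y]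
    [MeasurableSpace X] [MeasurableSpace Y] (μ : Measure X) (ν : Measure Y) : ℝ :=
  sInf {c | ∃ π : Measure (X × Y), IsCoupling π μ ν ∧ c = gwCost π}

/-- `π` is an optimal Gromov–Wasserstein plan between `μ` and `ν`. -/
def IsOptGW {X Y : Type*} [PseudoMetricSpace X] [PseudoMetricSpace Y]
    [MeasurableSpace X] [MeasurableSpace Y]
    (π : Measure (X × Y)) (μ : Measure X) (ν : Measure Y) : Prop :=
  IsCoupling π μ ν ∧ gwCost π = gwSq μ ν

/-- The LGW objective of a three-plan on `S × X × Y`: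
`∬ |d_X(x,x') − d_Y(y,y')|² dπ dπ`. -/
noncomputable def lgwCost {S X Y : Type*} [PseudoMetricSpace X] [PseudoMetricSpace Y]
    [MeasurableSpace S] [MeasurableSpace X] [MeasurableSpace Y]
    (π : Measure (S × X × Y)) : ℝ :=
  ∫ p, ∫ q, (dist p.2.1 q.2.1 - dist p.2.2 q.2.2) ^ 2 ∂π ∂π

/-- The linear Gromov–Wasserstein value with reference `(S, σ)`:
infimum of the LGW objective over three-plans whose `(S,X)`- and `(S,Y)`-marginals
are optimal GW plans. -/
noncomputable def lgw {S X Y : Type*} [PseudoMetricSpace S] [PseudoMetricSpace X]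
    [PseudoMetricSpace Y] [MeasurableSpace S] [MeasurableSpace X] [MeasurableSpace Y]
    (σ : Measure S) (μ : Measure X) (ν : Measure Y) : ℝ :=
  sInf {c | ∃ π : Measure (S × X × Y),
    IsOptGW (π.map (fun p => (p.1, p.2.1))) σ μ ∧
    IsOptGW (π.map (fun p => (p.1, p.2.2))) σ ν ∧
    c = lgwCost π}

/-- The cost `c_ε` on `(S × X × Y)²`. -/
noncomputable def cEps {S X Y : Type*} [PseudoMetricSpace S] [PseudoMetricSpace X]
    [PseudoMetricSpace Y] (ε : ℝ) (p q : S × X × Y) : ℝ :=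
  ε * (dist p.2.1 q.2.1 - dist p.2.2 q.2.2) ^ 2
    + (dist p.1 q.1 - dist p.2.1 q.2.1) ^ 2
    + (dist p.1 q.1 - dist p.2.2 q.2.2) ^ 2

/-- The quadratic functional `π ↦ ∬ c_ε dπ dπ` of the ε-multi-marginal GW problem. -/
noncomputable def mgwEps {S X Y : Type*} [PseudoMetricSpace S] [PseudoMetricSpace X]
    [PseudoMetricSpace Y] [MeasurableSpace S] [MeasurableSpace X] [MeasurableSpace Y]
    (ε : ℝ) (π : Measure (S × X × Y)) : ℝ :=
  ∫ p, ∫ q, cEps ε p q ∂π ∂π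

/-- `π ∈ Π(σ, μ, ν)`: three-marginal coupling. -/
def IsTripleCoupling {S X Y : Type*} [MeasurableSpace S] [MeasurableSpace X]
    [MeasurableSpace Y] (π : Measure (S × X × Y))
    (σ : Measure S) (μ : Measure X) (ν : Measure Y) : Prop :=
  π.map Prod.fst = σ ∧ π.map (fun p => p.2.1) = μ ∧ π.map (fun p => p.2.2) = ν


section MGWAux

open ProbabilityTheory

variable {Z : Type*} [MetricSpace Z] [CompactSpace Z] [MeasurableSpace Z] [BorelSpace Z]

lemma MGW.cont_integrable (ν : Measure Z) [IsFiniteMeasure ν] {g : Z → ℝ} (hg : Continuous g) :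
    Integrable g ν :=
  (BoundedContinuousFunction.mkOfCompact ⟨g, hg⟩).integrable ν

lemma MGW.equicont {ι : Type*} (m : ι → ProbabilityMeasure Z) {f : Z × Z → ℝ}
    (hf : Continuous f) :
    Equicontinuous (fun (i : ι) (p : Z) => ∫ q, f (p, q) ∂(m i : Measure Z)) := by
  intro p₀
  rw [Metric.equicontinuousAt_iff]
  intro ε hε
  have huc : UniformContinuous f := CompactSpace.uniformContinuous_of_continuous hf
  rw [Metric.uniformContinuous_iff] at huc
  obtain ⟨δ, hδ, H⟩ := huc (ε / 2) (by linarith)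
  refine ⟨δ, hδ, fun p hp i => ?_⟩
  rw [dist_comm]
  have key : ∀ q : Z, dist (f (p, q)) (f (p₀, q)) < ε / 2 := by
    intro q
    apply H
    simp [Prod.dist_eq]
    exact hp
  have h1 : Integrable (fun q => f (p, q)) (m i : Measure Z) :=
    MGW.cont_integrable _ (hf.comp (Continuous.prodMk_right p))
  have h2 : Integrable (fun q => f (p₀, q)) (m i : Measure Z) :=
    MGW.cont_integrable _ (hf.comp (Continuous.prodMk_right p₀))
  calc dist (∫ q, f (p, q) ∂(m i : Measure Z)) (∫ q, f (p₀, q) ∂(m i : Measure Z))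
      = ‖∫ q, (f (p, q) - f (p₀, q)) ∂(m i : Measure Z)‖ := by
        rw [dist_eq_norm, integral_sub h1 h2]
    _ ≤ ε / 2 * ((m i : Measure Z) Set.univ).toReal := by
        apply norm_integral_le_of_norm_le_const
        filter_upwards with q
        rw [Real.norm_eq_abs, ← Real.dist_eq]
        exact (key q).le
    _ < ε := by simp; linarith

lemma MGW.cont_int (ν : ProbabilityMeasure Z) {f : Z × Z → ℝ} (hf : Continuous f) :
    Continuous (fun p => ∫ q, f (p, q) ∂(ν : Measure Z)) :=
  (MGW.equicont (fun _ : Unit => ν) hf).continuous ()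

lemma MGW.pm_integral_tendsto {μs : ℕ → ProbabilityMeasure Z} {μ : ProbabilityMeasure Z}
    (h : Tendsto μs atTop (𝓝 μ)) {g : Z → ℝ} (hg : Continuous g) :
    Tendsto (fun n => ∫ q, g q ∂(μs n : Measure Z)) atTop (𝓝 (∫ q, g q ∂(μ : Measure Z))) := by
  have := ProbabilityMeasure.tendsto_iff_forall_integral_tendsto.mp h
    (BoundedContinuousFunction.mkOfCompact ⟨g, hg⟩)
  simpa using this

lemma MGW.quad_tendsto {μs : ℕ → ProbabilityMeasure Z} {μ : ProbabilityMeasure Z}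
    (h : Tendsto μs atTop (𝓝 μ)) {f : Z × Z → ℝ} (hf : Continuous f) :
    Tendsto (fun n => ∫ p, ∫ q, f (p, q) ∂(μs n : Measure Z) ∂(μs n : Measure Z)) atTop
      (𝓝 (∫ p, ∫ q, f (p, q) ∂(μ : Measure Z) ∂(μ : Measure Z))) := by
  set F : ℕ → Z → ℝ := fun n p => ∫ q, f (p, q) ∂(μs n : Measure Z) with hF
  set G : Z → ℝ := fun p => ∫ q, f (p, q) ∂(μ : Measure Z) with hG
  have hGc : Continuous G := MGW.cont_int μ hf
  have hFc : ∀ n, Continuous (F n) := fun n => MGW.cont_int (μs n) hf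
  have hpt : Tendsto F atTop (𝓝 G) := by
    rw [tendsto_pi_nhds]
    intro p
    exact MGW.pm_integral_tendsto h (hf.comp (Continuous.prodMk_right p))
  have hequi : Equicontinuous F := by
    have := MGW.equicont μs hf
    exact this
  have huni : TendstoUniformly F G atTop := by
    have := (hequi.tendsto_uniformFun_iff_pi atTop G).mpr hpt
    rwa [UniformFun.tendsto_iff_tendstoUniformly] at this
  have hdiff : Tendsto (fun n => ∫ p, (F n p - G p) ∂(μs n : Measure Z)) atTop (𝓝 0) := by
    rw [NormedAddCommGroup.tendsto_nhds_zero]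
    intro ε hε
    rw [Metric.tendstoUniformly_iff] at huni
    filter_upwards [huni (ε / 2) (by linarith)] with n hn
    have : ‖∫ p, (F n p - G p) ∂(μs n : Measure Z)‖
        ≤ ε / 2 * ((μs n : Measure Z) Set.univ).toReal := by
      apply norm_integral_le_of_norm_le_const
      filter_upwards with p
      rw [Real.norm_eq_abs, ← Real.dist_eq, dist_comm]
      exact (hn p).le
    simp only [measure_univ, ENNReal.toReal_one, mul_one] at this
    calc ‖∫ p, (F n p - G p) ∂(μs n : Measure Z)‖ ≤ ε / 2 := this
      _ < ε := by linarith
  have hGlim : Tendsto (fun n => ∫ p, G p ∂(μs n : Measure Z)) atTop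
      (𝓝 (∫ p, G p ∂(μ : Measure Z))) := MGW.pm_integral_tendsto h hGc
  have := hdiff.add hGlim
  rw [zero_add] at this
  convert this using 2 with n
  rw [integral_sub (MGW.cont_integrable _ (hFc n)) (MGW.cont_integrable _ hGc)]
  ring

lemma MGW.double_map {W : Type*} [MetricSpace W] [CompactSpace W] [MeasurableSpace W]
    [BorelSpace W] (π : Measure Z) [IsProbabilityMeasure π] {e : Z → W} (he : Continuous e)
    {f : W × W → ℝ} (hf : Continuous f) :
    ∫ p, ∫ q, f (p, q) ∂(π.map e) ∂(π.map e) = ∫ p, ∫ q, f (e p, e q) ∂π ∂π := by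
  have hc : ∀ w : W, Continuous (fun q : W => f (w, q)) :=
    fun w => hf.comp (Continuous.prodMk_right w)
  have hpm : IsProbabilityMeasure (π.map e) := Measure.isProbabilityMeasure_map he.measurable.aemeasurable
  rw [integral_map he.measurable.aemeasurable]
  · congr 1
    funext p
    rw [integral_map he.measurable.aemeasurable ((hc (e p)).aestronglyMeasurable)]
  · exact (MGW.cont_int (⟨π.map e, hpm⟩ : ProbabilityMeasure W) hf).aestronglyMeasurable

lemma MGW.limit_map {W : Type*} [MetricSpace W] [CompactSpace W] [MeasurableSpace W]
    [BorelSpace W] {πs : ℕ → ProbabilityMeasure Z} {πbar : ProbabilityMeasure Z}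
    (h : Tendsto πs atTop (𝓝 πbar)) {g : Z → W} (hg : Continuous g)
    (m : Measure W) (hm : ∀ n, (πs n : Measure Z).map g = m) :
    (πbar : Measure Z).map g = m := by
  have hmI : IsProbabilityMeasure m := by
    rw [← hm 0]
    exact Measure.isProbabilityMeasure_map hg.measurable.aemeasurable
  have ht := ProbabilityMeasure.tendsto_map_of_tendsto_of_continuous πs πbar h hg
  have hconst : (fun n => (πs n).map hg.measurable.aemeasurable)
      = fun _ => (⟨m, hmI⟩ : ProbabilityMeasure W) := by
    funext n
    apply Subtype.ext
    simpa using hm n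
  rw [hconst] at ht
  have := tendsto_nhds_unique ht tendsto_const_nhds
  have := congrArg (fun ν : ProbabilityMeasure W => (ν : Measure W)) this
  simpa using this

lemma MGW.map_compProd_snd {α β γ δ : Type*} [MeasurableSpace α] [MeasurableSpace β]
    [MeasurableSpace γ] [MeasurableSpace δ] (μ : Measure α) [SFinite μ]
    (ξ : Kernel α (β × γ)) [IsSFiniteKernel ξ] {g : β × γ → δ} (hg : Measurable g) :
    (μ ⊗ₘ ξ).map (fun p => (p.1, g p.2)) = μ ⊗ₘ (ξ.map g) := by
  have hgm : Measurable (fun p : α × β × γ => (p.1, g p.2)) :=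
    measurable_fst.prodMk (hg.comp measurable_snd)
  ext s hs
  rw [Measure.map_apply hgm hs, Measure.compProd_apply (hgm hs), Measure.compProd_apply hs]
  congr 1
  funext a
  rw [Kernel.map_apply' _ hg _ (measurable_prodMk_left hs)]
  rfl

lemma MGW.gwCost_nonneg {X Y : Type*} [PseudoMetricSpace X] [PseudoMetricSpace Y]
    [MeasurableSpace X] [MeasurableSpace Y] (π : Measure (X × Y)) : 0 ≤ gwCost π :=
  integral_nonneg fun _ => integral_nonneg fun _ => sq_nonneg _

lemma MGW.gwSq_le {X Y : Type*} [PseudoMetricSpace X] [PseudoMetricSpace Y]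
    [MeasurableSpace X] [MeasurableSpace Y] {π : Measure (X × Y)} {μ : Measure X}
    {ν : Measure Y} (h : IsCoupling π μ ν) : gwSq μ ν ≤ gwCost π :=
  csInf_le ⟨0, fun c ⟨π', _, hc⟩ => hc ▸ MGW.gwCost_nonneg π'⟩ ⟨π, h, rfl⟩

lemma MGW.lgwCost_nonneg {S X Y : Type*} [PseudoMetricSpace X] [PseudoMetricSpace Y]
    [MeasurableSpace S] [MeasurableSpace X] [MeasurableSpace Y]
    (π : Measure (S × X × Y)) : 0 ≤ lgwCost π :=
  integral_nonneg fun _ => integral_nonneg fun _ => sq_nonneg _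

lemma MGW.mgwEps_eq {S X Y : Type*}
    [MetricSpace S] [CompactSpace S] [MeasurableSpace S] [BorelSpace S]
    [MetricSpace X] [CompactSpace X] [MeasurableSpace X] [BorelSpace X]
    [MetricSpace Y] [CompactSpace Y] [MeasurableSpace Y] [BorelSpace Y]
    (ε : ℝ) (π : Measure (S × X × Y)) [IsProbabilityMeasure π] :
    mgwEps ε π = ε * lgwCost π
      + (∫ p, ∫ q, (dist p.1 q.1 - dist p.2.1 q.2.1) ^ 2 ∂π ∂π)
      + (∫ p, ∫ q, (dist p.1 q.1 - dist p.2.2 q.2.2) ^ 2 ∂π ∂π) := by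
  set Z := S × X × Y
  have c1 : Continuous (fun r : Z × Z => (dist r.1.2.1 r.2.2.1 - dist r.1.2.2 r.2.2.2) ^ 2) := by
    show Continuous (fun r : (S × X × Y) × (S × X × Y) => (dist r.1.2.1 r.2.2.1 - dist r.1.2.2 r.2.2.2) ^ 2)
    fun_prop
  have c2 : Continuous (fun r : Z × Z => (dist r.1.1 r.2.1 - dist r.1.2.1 r.2.2.1) ^ 2) := by
    show Continuous (fun r : (S × X × Y) × (S × X × Y) => (dist r.1.1 r.2.1 - dist r.1.2.1 r.2.2.1) ^ 2)
    fun_prop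
  have c3 : Continuous (fun r : Z × Z => (dist r.1.1 r.2.1 - dist r.1.2.2 r.2.2.2) ^ 2) := by
    show Continuous (fun r : (S × X × Y) × (S × X × Y) => (dist r.1.1 r.2.1 - dist r.1.2.2 r.2.2.2) ^ 2)
    fun_prop
  have hinner : ∀ p : Z, ∫ q, cEps ε p q ∂π
      = ε * (∫ q, (dist p.2.1 q.2.1 - dist p.2.2 q.2.2) ^ 2 ∂π)
        + (∫ q, (dist p.1 q.1 - dist p.2.1 q.2.1) ^ 2 ∂π)
        + (∫ q, (dist p.1 q.1 - dist p.2.2 q.2.2) ^ 2 ∂π) := by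
    intro p
    have i1 : Integrable (fun q : Z => (dist p.2.1 q.2.1 - dist p.2.2 q.2.2) ^ 2) π :=
      MGW.cont_integrable _ (c1.comp (Continuous.prodMk_right p))
    have i2 : Integrable (fun q : Z => (dist p.1 q.1 - dist p.2.1 q.2.1) ^ 2) π :=
      MGW.cont_integrable _ (c2.comp (Continuous.prodMk_right p))
    have i3 : Integrable (fun q : Z => (dist p.1 q.1 - dist p.2.2 q.2.2) ^ 2) π :=
      MGW.cont_integrable _ (c3.comp (Continuous.prodMk_right p))
    have i12 : Integrable (fun q : Z => ε * (dist p.2.1 q.2.1 - dist p.2.2 q.2.2) ^ 2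
        + (dist p.1 q.1 - dist p.2.1 q.2.1) ^ 2) π := (i1.const_mul ε).add i2
    simp only [cEps]
    rw [integral_add i12 i3, integral_add (i1.const_mul ε) i2, integral_const_mul ε _]
  have hpm : IsProbabilityMeasure π := inferInstance
  have I1 : Integrable (fun p : Z => ∫ q, (dist p.2.1 q.2.1 - dist p.2.2 q.2.2) ^ 2 ∂π) π :=
    MGW.cont_integrable _ (MGW.cont_int (⟨π, hpm⟩ : ProbabilityMeasure Z) c1)
  have I2 : Integrable (fun p : Z => ∫ q, (dist p.1 q.1 - dist p.2.1 q.2.1) ^ 2 ∂π) π :=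
    MGW.cont_integrable _ (MGW.cont_int (⟨π, hpm⟩ : ProbabilityMeasure Z) c2)
  have I3 : Integrable (fun p : Z => ∫ q, (dist p.1 q.1 - dist p.2.2 q.2.2) ^ 2 ∂π) π :=
    MGW.cont_integrable _ (MGW.cont_int (⟨π, hpm⟩ : ProbabilityMeasure Z) c3)
  calc mgwEps ε π
      = ∫ p, (ε * (∫ q, (dist p.2.1 q.2.1 - dist p.2.2 q.2.2) ^ 2 ∂π)
        + (∫ q, (dist p.1 q.1 - dist p.2.1 q.2.1) ^ 2 ∂π)
        + (∫ q, (dist p.1 q.1 - dist p.2.2 q.2.2) ^ 2 ∂π)) ∂π := by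
        unfold mgwEps
        exact integral_congr_ae (Filter.Eventually.of_forall hinner)
    _ = ε * lgwCost π
      + (∫ p, ∫ q, (dist p.1 q.1 - dist p.2.1 q.2.1) ^ 2 ∂π ∂π)
      + (∫ p, ∫ q, (dist p.1 q.1 - dist p.2.2 q.2.2) ^ 2 ∂π ∂π) := by
        have I12 : Integrable (fun p : Z => ε * (∫ q, (dist p.2.1 q.2.1 - dist p.2.2 q.2.2) ^ 2 ∂π)
            + (∫ q, (dist p.1 q.1 - dist p.2.1 q.2.1) ^ 2 ∂π)) π := (I1.const_mul ε).add I2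
        rw [integral_add I12 I3, integral_add (I1.const_mul ε) I2, integral_const_mul ε _]
        rfl

end MGWAux

open ProbabilityTheory

/-- feasibility of the limit plan: the limit `π̄` of minimizers satisfies
`∬ (d_S − d_X)² dπ̄ dπ̄ = GW(S,X)²` and `∬ (d_S − d_Y)² dπ̄ dπ̄ = GW(S,Y)²`; in particular
its `(S,X)`- and `(S,Y)`-marginals are optimal GW plans. -/
theorem mgw_limit_feasible
    {S X Y : Type*}
    [MetricSpace S] [CompactSpace S] [MeasurableSpace S] [BorelSpace S]
    [MetricSpace X] [CompactSpace X] [MeasurableSpace X] [BorelSpace X]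
    [MetricSpace Y] [CompactSpace Y] [MeasurableSpace Y] [BorelSpace Y]
    (σ : Measure S) (μ : Measure X) (ν : Measure Y)
    [IsProbabilityMeasure σ] [IsProbabilityMeasure μ] [IsProbabilityMeasure ν]
    (πf : ℝ → ProbabilityMeasure (S × X × Y))
    (hmin : ∀ ε : ℝ, 0 < ε →
      IsTripleCoupling (πf ε : Measure (S × X × Y)) σ μ ν ∧
      ∀ π' : Measure (S × X × Y), IsTripleCoupling π' σ μ ν →
        mgwEps ε (πf ε : Measure (S × X × Y)) ≤ mgwEps ε π')
    (πbar : ProbabilityMeasure (S × X × Y)) (e : ℕ → ℝ)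
    (hpos : ∀ n, 0 < e n) (hanti : StrictAnti e) (he0 : Tendsto e atTop (𝓝 0))
    (hconv : Tendsto (fun n => πf (e n)) atTop (𝓝 πbar)) :
    (∫ p, ∫ q, (dist p.1 q.1 - dist p.2.1 q.2.1) ^ 2
        ∂(πbar : Measure (S × X × Y)) ∂(πbar : Measure (S × X × Y))) = gwSq σ μ ∧
    (∫ p, ∫ q, (dist p.1 q.1 - dist p.2.2 q.2.2) ^ 2
        ∂(πbar : Measure (S × X × Y)) ∂(πbar : Measure (S × X × Y))) = gwSq σ ν ∧
    IsOptGW ((πbar : Measure (S × X × Y)).map (fun p => (p.1, p.2.1))) σ μ ∧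
    IsOptGW ((πbar : Measure (S × X × Y)).map (fun p => (p.1, p.2.2))) σ ν := by
  classical
  haveI hSne : Nonempty S := by
    rcases isEmpty_or_nonempty S with h | h
    · exfalso
      have h1 : σ Set.univ = 1 := measure_univ
      rw [Set.univ_eq_empty_iff.mpr h, measure_empty] at h1
      exact zero_ne_one h1
    · exact h
  haveI hXne : Nonempty X := by
    rcases isEmpty_or_nonempty X with h | h
    · exfalso
      have h1 : μ Set.univ = 1 := measure_univ
      rw [Set.univ_eq_empty_iff.mpr h, measure_empty] at h1
      exact zero_ne_one h1
    · exact h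
  haveI hYne : Nonempty Y := by
    rcases isEmpty_or_nonempty Y with h | h
    · exfalso
      have h1 : ν Set.univ = 1 := measure_univ
      rw [Set.univ_eq_empty_iff.mpr h, measure_empty] at h1
      exact zero_ne_one h1
    · exact h
  have c2 : Continuous (fun r : (S × X × Y) × (S × X × Y) =>
      (dist r.1.1 r.2.1 - dist r.1.2.1 r.2.2.1) ^ 2) := by fun_prop
  have c3 : Continuous (fun r : (S × X × Y) × (S × X × Y) =>
      (dist r.1.1 r.2.1 - dist r.1.2.2 r.2.2.2) ^ 2) := by fun_prop
  have hg1 : Continuous (fun p : S × X × Y => (p.1, p.2.1)) := by fun_prop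
  have hg2 : Continuous (fun p : S × X × Y => (p.1, p.2.2)) := by fun_prop
  have cSX : Continuous (fun r : (S × X) × (S × X) =>
      (dist r.1.1 r.2.1 - dist r.1.2 r.2.2) ^ 2) := by fun_prop
  have cSY : Continuous (fun r : (S × Y) × (S × Y) =>
      (dist r.1.1 r.2.1 - dist r.1.2 r.2.2) ^ 2) := by fun_prop
  set A : ℝ := ∫ p, ∫ q, (dist p.1 q.1 - dist p.2.1 q.2.1) ^ 2
      ∂(πbar : Measure (S × X × Y)) ∂(πbar : Measure (S × X × Y)) with hA
  set B : ℝ := ∫ p, ∫ q, (dist p.1 q.1 - dist p.2.2 q.2.2) ^ 2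
      ∂(πbar : Measure (S × X × Y)) ∂(πbar : Measure (S × X × Y)) with hB
  -- marginals of the limit
  have hmS : (πbar : Measure (S × X × Y)).map Prod.fst = σ :=
    MGW.limit_map hconv continuous_fst σ (fun n => ((hmin (e n) (hpos n)).1).1)
  have hmX : (πbar : Measure (S × X × Y)).map (fun p => p.2.1) = μ :=
    MGW.limit_map hconv (by fun_prop) μ (fun n => ((hmin (e n) (hpos n)).1).2.1)
  have hmY : (πbar : Measure (S × X × Y)).map (fun p => p.2.2) = ν :=
    MGW.limit_map hconv (by fun_prop) ν (fun n => ((hmin (e n) (hpos n)).1).2.2)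
  have hc1 : IsCoupling ((πbar : Measure (S × X × Y)).map (fun p => (p.1, p.2.1))) σ μ := by
    constructor
    · rw [Measure.map_map measurable_fst hg1.measurable]
      exact hmS
    · rw [Measure.map_map measurable_snd hg1.measurable]
      exact hmX
  have hc2 : IsCoupling ((πbar : Measure (S × X × Y)).map (fun p => (p.1, p.2.2))) σ ν := by
    constructor
    · rw [Measure.map_map measurable_fst hg2.measurable]
      exact hmS
    · rw [Measure.map_map measurable_snd hg2.measurable]
      exact hmY
  have hAeq : gwCost ((πbar : Measure (S × X × Y)).map (fun p => (p.1, p.2.1))) = A :=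
    MGW.double_map (πbar : Measure (S × X × Y)) hg1 cSX
  have hBeq : gwCost ((πbar : Measure (S × X × Y)).map (fun p => (p.1, p.2.2))) = B :=
    MGW.double_map (πbar : Measure (S × X × Y)) hg2 cSY
  have hlow1 : gwSq σ μ ≤ A := hAeq ▸ MGW.gwSq_le hc1
  have hlow2 : gwSq σ ν ≤ B := hBeq ▸ MGW.gwSq_le hc2
  -- upper bound via gluing of near-optimal couplings
  have hub : ∀ δ : ℝ, 0 < δ → A + B ≤ gwSq σ μ + gwSq σ ν + (δ + δ) := by
    intro δ hδ
    have hne1 : {c | ∃ π : Measure (S × X), IsCoupling π σ μ ∧ c = gwCost π}.Nonempty :=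
      ⟨gwCost (σ.prod μ), σ.prod μ, ⟨Measure.fst_prod, Measure.snd_prod⟩, rfl⟩
    have hne2 : {c | ∃ π : Measure (S × Y), IsCoupling π σ ν ∧ c = gwCost π}.Nonempty :=
      ⟨gwCost (σ.prod ν), σ.prod ν, ⟨Measure.fst_prod, Measure.snd_prod⟩, rfl⟩
    obtain ⟨cA, ⟨γ₁, hγ₁, rfl⟩, hcA⟩ :=
      exists_lt_of_csInf_lt hne1 (lt_add_of_pos_right (gwSq σ μ) hδ)
    obtain ⟨cB, ⟨γ₂, hγ₂, rfl⟩, hcB⟩ :=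
      exists_lt_of_csInf_lt hne2 (lt_add_of_pos_right (gwSq σ ν) hδ)
    haveI hγ₁p : IsProbabilityMeasure γ₁ := by
      constructor
      have h1 := congrArg (fun m : Measure S => m Set.univ) hγ₁.1
      simpa [Measure.map_apply measurable_fst MeasurableSet.univ] using h1
    haveI hγ₂p : IsProbabilityMeasure γ₂ := by
      constructor
      have h1 := congrArg (fun m : Measure S => m Set.univ) hγ₂.1
      simpa [Measure.map_apply measurable_fst MeasurableSet.univ] using h1
    have hfst1 : γ₁.fst = σ := hγ₁.1
    have hfst2 : γ₂.fst = σ := hγ₂.1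
    set π' : Measure (S × X × Y) := σ ⊗ₘ (γ₁.condKernel ×ₖ γ₂.condKernel) with hπ'
    haveI : IsProbabilityMeasure π' := by rw [hπ']; infer_instance
    have hm1 : π'.map (fun p => (p.1, p.2.1)) = γ₁ := by
      have h := MGW.map_compProd_snd σ (γ₁.condKernel ×ₖ γ₂.condKernel)
        (measurable_fst : Measurable (Prod.fst : X × Y → X))
      rw [hπ']
      rw [show (fun p : S × X × Y => (p.1, p.2.1))
        = (fun p : S × (X × Y) => (p.1, Prod.fst p.2)) from rfl, h, ← Kernel.fst_eq,
        Kernel.fst_prod, ← hfst1]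
      exact γ₁.disintegrate γ₁.condKernel
    have hm2 : π'.map (fun p => (p.1, p.2.2)) = γ₂ := by
      have h := MGW.map_compProd_snd σ (γ₁.condKernel ×ₖ γ₂.condKernel)
        (measurable_snd : Measurable (Prod.snd : X × Y → Y))
      rw [hπ']
      rw [show (fun p : S × X × Y => (p.1, p.2.2))
        = (fun p : S × (X × Y) => (p.1, Prod.snd p.2)) from rfl, h, ← Kernel.snd_eq,
        Kernel.snd_prod, ← hfst2]
      exact γ₂.disintegrate γ₂.condKernel
    have htc : IsTripleCoupling π' σ μ ν := by
      refine ⟨?_, ?_, ?_⟩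
      · rw [hπ']
        exact Measure.fst_compProd σ _
      · have h : π'.map (fun p => p.2.1)
            = (π'.map (fun p => (p.1, p.2.1))).map Prod.snd := by
          rw [Measure.map_map measurable_snd hg1.measurable]
          rfl
        rw [h, hm1]
        exact hγ₁.2
      · have h : π'.map (fun p => p.2.2)
            = (π'.map (fun p => (p.1, p.2.2))).map Prod.snd := by
          rw [Measure.map_map measurable_snd hg2.measurable]
          rfl
        rw [h, hm2]
        exact hγ₂.2
    have hA' : (∫ p, ∫ q, (dist p.1 q.1 - dist p.2.1 q.2.1) ^ 2 ∂π' ∂π') = gwCost γ₁ := by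
      have h := MGW.double_map π' hg1 cSX
      rw [hm1] at h
      exact h.symm
    have hB' : (∫ p, ∫ q, (dist p.1 q.1 - dist p.2.2 q.2.2) ^ 2 ∂π' ∂π') = gwCost γ₂ := by
      have h := MGW.double_map π' hg2 cSY
      rw [hm2] at h
      exact h.symm
    have key : ∀ n,
        (∫ p, ∫ q, (dist p.1 q.1 - dist p.2.1 q.2.1) ^ 2
          ∂(πf (e n) : Measure (S × X × Y)) ∂(πf (e n) : Measure (S × X × Y)))
        + (∫ p, ∫ q, (dist p.1 q.1 - dist p.2.2 q.2.2) ^ 2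
          ∂(πf (e n) : Measure (S × X × Y)) ∂(πf (e n) : Measure (S × X × Y)))
        ≤ e n * lgwCost π' + (gwCost γ₁ + gwCost γ₂) := by
      intro n
      have h := (hmin (e n) (hpos n)).2 π' htc
      rw [MGW.mgwEps_eq, MGW.mgwEps_eq] at h
      rw [hA', hB'] at h
      have h0 : 0 ≤ e n * lgwCost (πf (e n) : Measure (S × X × Y)) :=
        mul_nonneg (hpos n).le (MGW.lgwCost_nonneg _)
      linarith
    have hABn : Tendsto (fun n =>
        (∫ p, ∫ q, (dist p.1 q.1 - dist p.2.1 q.2.1) ^ 2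
          ∂(πf (e n) : Measure (S × X × Y)) ∂(πf (e n) : Measure (S × X × Y)))
        + (∫ p, ∫ q, (dist p.1 q.1 - dist p.2.2 q.2.2) ^ 2
          ∂(πf (e n) : Measure (S × X × Y)) ∂(πf (e n) : Measure (S × X × Y))))
        atTop (𝓝 (A + B)) :=
      (MGW.quad_tendsto hconv c2).add (MGW.quad_tendsto hconv c3)
    have hRHS : Tendsto (fun n => e n * lgwCost π' + (gwCost γ₁ + gwCost γ₂)) atTop
        (𝓝 (0 * lgwCost π' + (gwCost γ₁ + gwCost γ₂))) :=
      (he0.mul tendsto_const_nhds).add tendsto_const_nhds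
    have hle := le_of_tendsto_of_tendsto' hABn hRHS key
    rw [zero_mul, zero_add] at hle
    linarith
  have hAB_le : A + B ≤ gwSq σ μ + gwSq σ ν := by
    refine le_of_forall_pos_le_add ?_
    intro ε hε
    have := hub (ε / 2) (by linarith)
    linarith
  have hA_final : A = gwSq σ μ := le_antisymm (by linarith) hlow1
  have hB_final : B = gwSq σ ν := le_antisymm (by linarith) hlow2
  refine ⟨hA_final, hB_final, ⟨hc1, ?_⟩, ⟨hc2, ?_⟩⟩
  · rw [hAeq]
    exact hA_final
  · rw [hBeq]
    exact hB_final
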